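/- arXiv:2102.11840 — 3 statements merged into one kernel-verified Lean document; each statement's English description precedes it below -/
import Mathlib

section
/- Let d, m ∈ ℕ, let x₁,...,x_m ∈ ℝᵈ \ {0} be pairwise linearly independent, let W: Ω → ℝᵈ be a standard normal random vector, and define G ∈ ℝ^{m×m} by G_{i,j} = P(⟨W, xᵢ⟩ ≥ 0, ⟨W, xⱼ⟩ ≥ 0) and H ∈ ℝ^{m×m} by H_{i,j} = ⟨xᵢ, xⱼ⟩ G_{i,j}. Then the smallest eigenvalues of G and of H are both strictly positive (i.e., G and H are positive definite). -/
open MeasureTheory ProbabilityTheory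


lemma sign_aux {a s : ℝ} (h : |a - s| < |s|) : (0 ≤ a ↔ 0 < s) := by
  rw [abs_sub_lt_iff] at h
  rcases abs_cases s with ⟨h1, h2⟩ | ⟨h1, h2⟩ <;>
    constructor <;> intro h3 <;> linarith [h.1, h.2]

lemma exists_w0 {d m : ℕ} (x : Fin m → EuclideanSpace ℝ (Fin d))
    (hind : ∀ (l : ℝ) (i j : Fin m), i ≠ j → x i ≠ l • x j) (i : Fin m) :
    ∃ w₀ : EuclideanSpace ℝ (Fin d), (inner ℝ w₀ (x i) : ℝ) = 0 ∧
      ∀ j, j ≠ i → (inner ℝ w₀ (x j) : ℝ) ≠ 0 := by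
  set K : Submodule ℝ (EuclideanSpace ℝ (Fin d)) := (ℝ ∙ x i)ᗮ with hK
  set p : {j : Fin m // j ≠ i} → Subspace ℝ K :=
    fun j => Submodule.comap K.subtype (ℝ ∙ x j.1)ᗮ with hp
  have hne : ∀ j, p j ≠ ⊤ := by
    intro j hj
    have hle : K ≤ (ℝ ∙ x j.1)ᗮ := by
      intro v hv
      have : (⟨v, hv⟩ : K) ∈ p j := hj ▸ Submodule.mem_top
      exact this
    have h2 : (ℝ ∙ x j.1)ᗮᗮ ≤ (ℝ ∙ x i)ᗮᗮ := Submodule.orthogonal_le hle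
    rw [Submodule.orthogonal_orthogonal, Submodule.orthogonal_orthogonal] at h2
    have : x j.1 ∈ ℝ ∙ x i := h2 (Submodule.mem_span_singleton_self _)
    obtain ⟨a, ha⟩ := Submodule.mem_span_singleton.mp this
    exact hind a j.1 i j.2 ha.symm
  have hcov : ⋃ j, ((p j : Subspace ℝ K) : Set K) ≠ Set.univ := by
    intro h
    obtain ⟨j, hj⟩ := Subspace.exists_eq_top_of_iUnion_eq_univ h
    exact hne j hj
  obtain ⟨v, hv⟩ := Set.ne_univ_iff_exists_notMem _ |>.mp hcov
  simp only [Set.mem_iUnion, not_exists, SetLike.mem_coe] at hv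
  refine ⟨v, ?_, ?_⟩
  · have hv2 : (v : EuclideanSpace ℝ (Fin d)) ∈ (ℝ ∙ x i)ᗮ := v.2
    rw [Submodule.mem_orthogonal_singleton_iff_inner_right] at hv2
    rw [real_inner_comm]; exact hv2
  · intro j hj hzero
    apply hv ⟨j, hj⟩
    simp only [hp, Submodule.mem_comap, Submodule.subtype_apply]
    rw [Submodule.mem_orthogonal_singleton_iff_inner_right]
    rwa [real_inner_comm]


lemma ball_pos' {Ω : Type*} [MeasurableSpace Ω] (P : Measure Ω) [IsProbabilityMeasure P]
    {d : ℕ} (W : Ω → EuclideanSpace ℝ (Fin d))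
    (hmeas : ∀ k : Fin d, Measurable fun ω => W ω k)
    (hlaw : ∀ k : Fin d, Measure.map (fun ω => W ω k) P = gaussianReal 0 1)
    (hindep : iIndepFun
      (fun k ω => W ω k) P)
    (z : Fin d → ℝ) {ε : ℝ} (hε : 0 < ε) :
    0 < P {ω | ∀ k, |W ω k - z k| < ε} := by
  have hset : {ω | ∀ k, |W ω k - z k| < ε} =
      ⋂ k ∈ (Finset.univ : Finset (Fin d)),
        (fun ω => W ω k) ⁻¹' Set.Ioo (z k - ε) (z k + ε) := by
    ext ω
    simp only [Set.mem_setOf_eq, Set.mem_iInter, Set.mem_preimage, Set.mem_Ioo,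
      Finset.mem_univ, forall_true_left]
    constructor
    · intro h k; have := h k; rw [abs_sub_lt_iff] at this
      constructor <;> linarith [this.1, this.2]
    · intro h k; rw [abs_sub_lt_iff]
      have := h k
      constructor <;> linarith [this.1, this.2]
  rw [hset, hindep.measure_inter_preimage_eq_mul _
    (fun k _ => measurableSet_Ioo)]
  rw [pos_iff_ne_zero, Ne, Finset.prod_eq_zero_iff]
  push_neg
  intro k _
  rw [← Measure.map_apply (hmeas k) measurableSet_Ioo, hlaw k]
  intro h0
  have hvol : (volume : Measure ℝ) (Set.Ioo (z k - ε) (z k + ε)) = 0 :=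
    gaussianReal_absolutelyContinuous' 0 (by norm_num : (1:NNReal) ≠ 0) h0
  rw [Real.volume_Ioo] at hvol
  simp only [ENNReal.ofReal_eq_zero] at hvol
  linarith

lemma key {Ω : Type*} [MeasurableSpace Ω] (P : Measure Ω) [IsProbabilityMeasure P]
    {d m : ℕ} (x : Fin m → EuclideanSpace ℝ (Fin d))
    (hx0 : ∀ i, x i ≠ 0)
    (hind : ∀ (l : ℝ) (i j : Fin m), i ≠ j → x i ≠ l • x j)
    (W : Ω → EuclideanSpace ℝ (Fin d))
    (hmeas : ∀ k : Fin d, Measurable fun ω => W ω k)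
    (hlaw : ∀ k : Fin d, Measure.map (fun ω => W ω k) P = gaussianReal 0 1)
    (hindep : iIndepFun
      (fun k ω => W ω k) P)
    (i : Fin m) (S : Set Ω) (hS : ∀ᵐ ω ∂P, ω ∈ S) :
    ∃ ω₁ ∈ S, ∃ ω₂ ∈ S, (0 ≤ (inner ℝ (W ω₁) (x i) : ℝ)) ∧
      ¬ (0 ≤ (inner ℝ (W ω₂) (x i) : ℝ)) ∧
      ∀ j, j ≠ i → ((0 ≤ (inner ℝ (W ω₁) (x j) : ℝ)) ↔ (0 ≤ (inner ℝ (W ω₂) (x j) : ℝ))) := by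
  classical
  -- inner products as coordinate sums
  have hφ : ∀ (j : Fin m) (w : EuclideanSpace ℝ (Fin d)),
      (inner ℝ w (x j) : ℝ) = ∑ k, w k * x j k := by
    intro j w
    simp [PiLp.inner_apply, RCLike.inner_apply, conj_trivial]
    exact Finset.sum_congr rfl fun _ _ => mul_comm _ _
  obtain ⟨w₀E, hw0i, hw0j⟩ := exists_w0 x hind i
  set w₀ : Fin d → ℝ := fun k => w₀E k with hw₀
  set s : Fin m → ℝ := fun j => ∑ k, w₀ k * x j k with hsdef
  have hs0 : s i = 0 := by rw [hsdef]; simpa [hφ] using hw0i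
  have hsj : ∀ j, j ≠ i → s j ≠ 0 := by
    intro j hj
    have := hw0j j hj
    rwa [hφ] at this
  set M : Fin m → ℝ := fun j => ∑ k, |x j k| with hMdef
  have hM0 : ∀ j, 0 ≤ M j := fun j => Finset.sum_nonneg fun k _ => abs_nonneg _
  have hMk : ∀ j k, |x j k| ≤ M j := fun j k =>
    Finset.single_le_sum (f := fun k => |x j k|) (fun k _ => abs_nonneg _) (Finset.mem_univ k)
  -- linear bound
  have hbound : ∀ (j : Fin m) (u v : Fin d → ℝ) (ε : ℝ), (∀ k, |u k - v k| ≤ ε) →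
      |(∑ k, u k * x j k) - ∑ k, v k * x j k| ≤ M j * ε := by
    intro j u v ε h
    rw [← Finset.sum_sub_distrib]
    refine (Finset.abs_sum_le_sum_abs _ _).trans ?_
    have : ∀ k ∈ Finset.univ, |u k * x j k - v k * x j k| ≤ |x j k| * ε := by
      intro k _
      rw [← sub_mul, abs_mul, mul_comm]
      exact mul_le_mul_of_nonneg_left (h k) (abs_nonneg _)
    refine (Finset.sum_le_sum this).trans ?_
    rw [← Finset.sum_mul]
  -- choice of ε
  have hεex : ∃ ε : ℝ, 0 < ε ∧ ∀ j, j ≠ i → M j * ε < |s j| := by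
    by_cases hT : (Finset.univ.erase i).Nonempty
    · refine ⟨(Finset.univ.erase i).inf' hT (fun j => |s j| / (M j + 1)), ?_, ?_⟩
      · rw [Finset.lt_inf'_iff]
        intro j hj
        have := hsj j (Finset.mem_erase.mp hj).1
        positivity
      · intro j hj
        have h1 : (Finset.univ.erase i).inf' hT (fun j => |s j| / (M j + 1)) ≤
            |s j| / (M j + 1) :=
          Finset.inf'_le _ (Finset.mem_erase.mpr ⟨hj, Finset.mem_univ j⟩)
        have h2 : 0 < |s j| := abs_pos.mpr (hsj j hj)
        have h3 := hM0 j
        calc M j * (Finset.univ.erase i).inf' hT (fun j => |s j| / (M j + 1))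
            ≤ M j * (|s j| / (M j + 1)) := mul_le_mul_of_nonneg_left h1 h3
          _ < |s j| := by rw [mul_div_assoc']; rw [div_lt_iff₀ (by linarith)]; nlinarith
    · refine ⟨1, one_pos, fun j hj => absurd ?_ hT⟩
      exact ⟨j, Finset.mem_erase.mpr ⟨hj, Finset.mem_univ j⟩⟩
  obtain ⟨ε, hε, hεs⟩ := hεex
  -- positivity of ‖x i‖²
  set N : ℝ := ∑ k, (x i k)^2 with hNdef
  have hN : 0 < N := by
    have hex : ∃ k, x i k ≠ 0 := by
      by_contra h
      push_neg at h
      exact hx0 i (by ext k; simpa using h k)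
    obtain ⟨k, hk⟩ := hex
    refine Finset.sum_pos' (fun k _ => sq_nonneg _) ⟨k, Finset.mem_univ k, ?_⟩
    positivity
  set δ : ℝ := ε / (2 * (M i + 1)) with hδdef
  have hδ : 0 < δ := by positivity
  have hδMi : δ * M i ≤ ε / 2 := by
    rw [hδdef]
    rw [div_mul_eq_mul_div, div_le_div_iff₀ (by positivity) (by norm_num)]
    nlinarith [hM0 i]
  set w₁ : Fin d → ℝ := fun k => w₀ k + δ * x i k with hw₁
  set w₂ : Fin d → ℝ := fun k => w₀ k - δ * x i k with hw₂
  have hφw₁ : (∑ k, w₁ k * x i k) = δ * N := by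
    rw [hw₁]
    have : ∀ k ∈ Finset.univ, (w₀ k + δ * x i k) * x i k
        = w₀ k * x i k + δ * (x i k)^2 := by intro k _; ring
    rw [Finset.sum_congr rfl this, Finset.sum_add_distrib, ← Finset.mul_sum,
      show (∑ k, w₀ k * x i k) = (0:ℝ) from hs0, ← hNdef]
    ring
  have hφw₂ : (∑ k, w₂ k * x i k) = -(δ * N) := by
    rw [hw₂]
    have : ∀ k ∈ Finset.univ, (w₀ k - δ * x i k) * x i k
        = w₀ k * x i k - δ * (x i k)^2 := by intro k _; ring
    rw [Finset.sum_congr rfl this, Finset.sum_sub_distrib, ← Finset.mul_sum,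
      show (∑ k, w₀ k * x i k) = (0:ℝ) from hs0, ← hNdef]
    ring
  set ε' : ℝ := min (ε/2) (δ * N / (2 * (M i + 1))) with hε'def
  have hε' : 0 < ε' := lt_min (by positivity) (by positivity)
  have hε'half : ε' ≤ ε / 2 := min_le_left _ _
  have hMiε' : M i * ε' < δ * N := by
    have h1 : ε' ≤ δ * N / (2 * (M i + 1)) := min_le_right _ _
    calc M i * ε' ≤ M i * (δ * N / (2 * (M i + 1))) :=
          mul_le_mul_of_nonneg_left h1 (hM0 i)
      _ < δ * N := by
          rw [mul_div_assoc', div_lt_iff₀ (by positivity)]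
          nlinarith [hM0 i, mul_pos hδ hN]
  -- the two events
  have hnon : ∀ (z : Fin d → ℝ), ∃ ω ∈ S, ∀ k, |W ω k - z k| < ε' := by
    intro z
    have hpos := ball_pos' P W hmeas hlaw hindep z hε'
    by_contra h
    push_neg at h
    have hsub : {ω | ∀ k, |W ω k - z k| < ε'} ⊆ Sᶜ := by
      intro ω hω hωS
      obtain ⟨k, hk⟩ := h ω hωS
      exact absurd (hω k) (not_lt.mpr hk)
    have h0 : P Sᶜ = 0 := by simpa [Set.compl_def] using ae_iff.mp hS
    exact hpos.ne' (measure_mono_null hsub h0)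
  obtain ⟨ω₁, hω₁S, hω₁⟩ := hnon w₁
  obtain ⟨ω₂, hω₂S, hω₂⟩ := hnon w₂
  -- distances to w₀
  have hd₀ : ∀ (ω : Ω) (z : Fin d → ℝ), (∀ k, |W ω k - z k| < ε') →
      (∀ k, |z k - w₀ k| = δ * |x i k|) → ∀ k, |W ω k - w₀ k| ≤ ε := by
    intro ω z hz hzw k
    calc |W ω k - w₀ k| ≤ |W ω k - z k| + |z k - w₀ k| := abs_sub_le _ _ _
      _ ≤ ε' + δ * |x i k| := by
          refine add_le_add (le_of_lt (hz k)) ?_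
          rw [hzw k]
      _ ≤ ε/2 + ε/2 := by
          refine add_le_add hε'half ?_
          calc δ * |x i k| ≤ δ * M i := mul_le_mul_of_nonneg_left (hMk i k) hδ.le
            _ ≤ ε / 2 := hδMi
      _ = ε := by ring
  have hw₁w₀ : ∀ k, |w₁ k - w₀ k| = δ * |x i k| := by
    intro k
    have h : w₁ k - w₀ k = δ * x i k := by rw [hw₁]; ring
    rw [h, abs_mul, abs_of_pos hδ]
  have hw₂w₀ : ∀ k, |w₂ k - w₀ k| = δ * |x i k| := by
    intro k
    have h : w₂ k - w₀ k = -(δ * x i k) := by rw [hw₂]; ring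
    rw [h, abs_neg, abs_mul, abs_of_pos hδ]
  -- sign preservation for j ≠ i
  have hsign : ∀ (ω : Ω), (∀ k, |W ω k - w₀ k| ≤ ε) → ∀ j, j ≠ i →
      ((0 ≤ (inner ℝ (W ω) (x j) : ℝ)) ↔ 0 < s j) := by
    intro ω hω j hj
    rw [hφ]
    refine sign_aux ?_
    exact lt_of_le_of_lt (hbound j (fun k => W ω k) w₀ ε hω) (hεs j hj)
  refine ⟨ω₁, hω₁S, ω₂, hω₂S, ?_, ?_, ?_⟩
  · rw [hφ]
    have h1 := hbound i (fun k => W ω₁ k) w₁ ε' (fun k => (hω₁ k).le)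
    rw [hφw₁, abs_sub_le_iff] at h1
    nlinarith [h1.1, h1.2]
  · rw [hφ]
    have h1 := hbound i (fun k => W ω₂ k) w₂ ε' (fun k => (hω₂ k).le)
    rw [hφw₂, abs_sub_le_iff] at h1
    intro hcon
    nlinarith [h1.1, h1.2]
  · intro j hj
    rw [hsign ω₁ (hd₀ ω₁ w₁ hω₁ hw₁w₀) j hj, hsign ω₂ (hd₀ ω₂ w₂ hω₂ hw₂w₀) j hj]

lemma posdef_aux {Ω : Type*} [MeasurableSpace Ω] (P : Measure Ω) [IsProbabilityMeasure P]
    {d m : ℕ} (x : Fin m → EuclideanSpace ℝ (Fin d))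
    (hx0 : ∀ i, x i ≠ 0)
    (hind : ∀ (l : ℝ) (i j : Fin m), i ≠ j → x i ≠ l • x j)
    (W : Ω → EuclideanSpace ℝ (Fin d))
    (hmeas : ∀ k : Fin d, Measurable fun ω => W ω k)
    (hlaw : ∀ k : Fin d, Measure.map (fun ω => W ω k) P = gaussianReal 0 1)
    (hindep : iIndepFun
      (fun k ω => W ω k) P)
    {F : Type*} [NormedAddCommGroup F] [InnerProductSpace ℝ F]
    (y : Fin m → F) (hy : ∀ i, y i ≠ 0)
    (M : Matrix (Fin m) (Fin m) ℝ)
    (hM : ∀ i j, M i j = (inner ℝ (y i) (y j) : ℝ) *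
      (P {ω | 0 ≤ (inner ℝ (W ω) (x i) : ℝ) ∧ 0 ≤ (inner ℝ (W ω) (x j) : ℝ)}).toReal) :
    M.PosDef := by
  classical
  set ip : Fin m → Ω → ℝ := fun j ω => (inner ℝ (W ω) (x j) : ℝ) with hip
  have hipm : ∀ j, Measurable (ip j) := by
    intro j
    have : ip j = fun ω => ∑ k, W ω k * x j k := by
      funext ω
      simp [hip, PiLp.inner_apply, RCLike.inner_apply, conj_trivial]
      exact Finset.sum_congr rfl fun _ _ => mul_comm _ _
    rw [this]
    exact Finset.measurable_sum _ (fun k _ => (hmeas k).mul_const _)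
  set A : Fin m → Fin m → Set Ω := fun i j => {ω | 0 ≤ ip i ω ∧ 0 ≤ ip j ω} with hA
  have hAm : ∀ i j, MeasurableSet (A i j) := by
    intro i j
    have : A i j = {ω | 0 ≤ ip i ω} ∩ {ω | 0 ≤ ip j ω} := rfl
    rw [this]
    exact (measurableSet_le measurable_const (hipm i)).inter
      (measurableSet_le measurable_const (hipm j))
  set ind : Fin m → Ω → ℝ := fun j ω => if 0 ≤ ip j ω then 1 else 0 with hinddef
  have hindicator : ∀ i j ω, ind i ω * ind j ω = (A i j).indicator (fun _ => (1:ℝ)) ω := by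
    intro i j ω
    rw [Set.indicator_apply]
    by_cases h1 : 0 ≤ ip i ω <;> by_cases h2 : 0 ≤ ip j ω <;>
      simp [hinddef, hA, h1, h2, Set.mem_setOf_eq]
  have hprodint : ∀ i j, Integrable (fun ω => ind i ω * ind j ω) P := by
    intro i j
    refine (((integrable_const (1:ℝ)).indicator (hAm i j))).congr ?_
    exact Filter.Eventually.of_forall fun ω => (hindicator i j ω).symm
  have hint : ∀ i j, ∫ ω, ind i ω * ind j ω ∂P = (P (A i j)).toReal := by
    intro i j
    rw [integral_congr_ae (Filter.Eventually.of_forall (hindicator i j))]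
    exact integral_indicator_one (hAm i j)
  have hMij : ∀ i j, M i j = (inner ℝ (y i) (y j) : ℝ) * (P (A i j)).toReal := hM
  rw [Matrix.posDef_iff_dotProduct_mulVec]
  constructor
  · have hsetcomm : ∀ i j, A i j = A j i := by
      intro i j; ext ω; exact and_comm
    ext i j
    rw [Matrix.conjTranspose_apply, hMij, hMij, star_trivial, hsetcomm,
      real_inner_comm (y j) (y i)]
  · intro c hc
    -- the random vector
    set u : Ω → F := fun ω => ∑ i, (c i * ind i ω) • y i with hu
    have hptwise : ∀ ω, (inner ℝ (u ω) (u ω) : ℝ)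
        = ∑ i, ∑ j, (c i * c j * (inner ℝ (y i) (y j) : ℝ)) * (ind i ω * ind j ω) := by
      intro ω
      rw [hu]
      simp only [sum_inner, inner_sum, real_inner_smul_left, real_inner_smul_right]
      exact Finset.sum_congr rfl fun i _ => Finset.sum_congr rfl fun j _ => by
        rw [real_inner_comm (y j) (y i)]; ring
    have hterm_int : ∀ i j : Fin m,
        Integrable (fun ω => (c i * c j * (inner ℝ (y i) (y j) : ℝ)) * (ind i ω * ind j ω)) P :=
      fun i j => (hprodint i j).const_mul _
    have hsum_int : Integrable (fun ω => (inner ℝ (u ω) (u ω) : ℝ)) P := by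
      refine Integrable.congr ?_
        (Filter.Eventually.of_forall fun ω => (hptwise ω).symm)
      exact integrable_finset_sum _ fun i _ => integrable_finset_sum _ fun j _ => hterm_int i j
    have hquad : dotProduct (star c) (M.mulVec c)
        = ∫ ω, (inner ℝ (u ω) (u ω) : ℝ) ∂P := by
      rw [integral_congr_ae (Filter.Eventually.of_forall hptwise)]
      rw [integral_finset_sum _ fun i _ => integrable_finset_sum _ fun j _ => hterm_int i j]
      have : ∀ i ∈ Finset.univ, (∫ ω, ∑ j, (c i * c j * (inner ℝ (y i) (y j) : ℝ))
          * (ind i ω * ind j ω) ∂P)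
          = ∑ j, (c i * c j * (inner ℝ (y i) (y j) : ℝ)) * (P (A i j)).toReal := by
        intro i _
        rw [integral_finset_sum _ fun j _ => hterm_int i j]
        exact Finset.sum_congr rfl fun j _ => by rw [integral_const_mul, hint]
      rw [Finset.sum_congr rfl this]
      simp only [dotProduct, Matrix.mulVec, Pi.star_apply, star_trivial, Finset.mul_sum]
      refine Finset.sum_congr rfl fun i _ => Finset.sum_congr rfl fun j _ => ?_
      rw [hMij]
      ring
    have hnonneg : 0 ≤ dotProduct (star c) (M.mulVec c) := by
      rw [hquad]
      exact integral_nonneg fun ω => real_inner_self_nonneg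
    rcases hnonneg.lt_or_eq with h | h
    · exact h
    exfalso
    -- the integral is zero, so u = 0 a.e.
    have hzero : (fun ω => (inner ℝ (u ω) (u ω) : ℝ)) =ᵐ[P] 0 := by
      rw [← integral_eq_zero_iff_of_nonneg (fun ω => real_inner_self_nonneg) hsum_int]
      rw [← hquad, ← h]
    have huzero : ∀ᵐ ω ∂P, u ω = 0 := by
      filter_upwards [hzero] with ω hω
      exact inner_self_eq_zero.mp hω
    obtain ⟨i₀, hi₀⟩ := Function.ne_iff.mp hc
    obtain ⟨ω₁, hω₁S, ω₂, hω₂S, h₁, h₂, hiff⟩ :=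
      key P x hx0 hind W hmeas hlaw hindep i₀ {ω | u ω = 0} huzero
    have hu₁ : u ω₁ = 0 := hω₁S
    have hu₂ : u ω₂ = 0 := hω₂S
    have hdiff : u ω₁ - u ω₂ = (c i₀) • y i₀ := by
      rw [hu]
      rw [← Finset.sum_sub_distrib]
      have heq : ∀ j ∈ Finset.univ, j ≠ i₀ →
          (c j * ind j ω₁) • y j - (c j * ind j ω₂) • y j = 0 := by
        intro j _ hj
        have : ind j ω₁ = ind j ω₂ := by
          simp only [hinddef]
          rcases (hiff j hj) with ⟨h1, h2⟩
          by_cases hcase : 0 ≤ ip j ω₁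
          · rw [if_pos hcase, if_pos (h1 hcase)]
          · rw [if_neg hcase, if_neg (fun hh => hcase (h2 hh))]
        rw [this, sub_self]
      rw [Finset.sum_eq_single_of_mem i₀ (Finset.mem_univ i₀) heq]
      have e1 : ind i₀ ω₁ = 1 := by simp only [hinddef]; rw [if_pos h₁]
      have e2 : ind i₀ ω₂ = 0 := by simp only [hinddef]; rw [if_neg h₂]
      rw [e1, e2, mul_one, mul_zero, zero_smul, sub_zero]
    rw [hu₁, hu₂, sub_zero] at hdiff
    rcases smul_eq_zero.mp hdiff.symm with h' | h'
    · exact hi₀ h'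
    · exact hy i₀ h'


/-- For pairwise linearly independent nonzero data `x₁, …, x_m ∈ ℝᵈ` and a `d`-dimensional
standard Gaussian vector `W` (i.e. with independent standard normal coordinates), the Gram-type
matrices `G i j = P(⟨W, xᵢ⟩ ≥ 0, ⟨W, xⱼ⟩ ≥ 0)` and `H i j = ⟨xᵢ, xⱼ⟩ G i j` are
positive definite (equivalently, their smallest eigenvalues are strictly positive). -/
theorem gram_matrices_posDef_of_gaussian
    {Ω : Type*} [MeasurableSpace Ω] (P : Measure Ω) [IsProbabilityMeasure P]
    (d m : ℕ) (x : Fin m → EuclideanSpace ℝ (Fin d))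
    (hx0 : ∀ i, x i ≠ 0)
    (hind : ∀ (l : ℝ) (i j : Fin m), i ≠ j → x i ≠ l • x j)
    (W : Ω → EuclideanSpace ℝ (Fin d))
    (hmeas : ∀ k : Fin d, Measurable fun ω => W ω k)
    (hlaw : ∀ k : Fin d, Measure.map (fun ω => W ω k) P = gaussianReal 0 1)
    (hindep : iIndepFun
      (fun k ω => W ω k) P)
    (G H : Matrix (Fin m) (Fin m) ℝ)
    (hG : ∀ i j, G i j =
      (P {ω | 0 ≤ (inner ℝ (W ω) (x i) : ℝ) ∧ 0 ≤ (inner ℝ (W ω) (x j) : ℝ)}).toReal)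
    (hH : ∀ i j, H i j = (inner ℝ (x i) (x j) : ℝ) * G i j) :
    G.PosDef ∧ H.PosDef := by
  constructor
  · refine posdef_aux P x hx0 hind W hmeas hlaw hindep
      (fun _ => (1:ℝ)) (fun _ => one_ne_zero) G ?_
    intro i j
    rw [hG i j]
    norm_num [RCLike.inner_apply]
  · refine posdef_aux P x hx0 hind W hmeas hlaw hindep x hx0 H ?_
    intro i j
    rw [hH i j, hG i j]
end

section
/- Let X be a standard normal random variable, A an event, and assume X and the indicator 1_A are independent. Then X²·1_A is sub-exponential with parameters (2, 4), i.e., for all λ ∈ (-1/4, 1/4) it holds that E[exp(λ(X²1_A - E[X²1_A]))] ≤ exp(2λ²). -/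
open MeasureTheory ProbabilityTheory

/-- `X` is sub-exponential with parameters `(ν, b)` with respect to `P`. -/
def IsSubExponential {Ω : Type*} [MeasurableSpace Ω] (P : Measure Ω) (X : Ω → ℝ)
    (ν b : ℝ) : Prop :=
  0 < ν ∧ 0 < b ∧ Measurable X ∧ Integrable X P ∧
    ∀ l : ℝ, l ∈ Set.Ioo (-(1 / b)) (1 / b) →
      (∫⁻ ω, ENNReal.ofReal (Real.exp (l * (X ω - ∫ x, X x ∂P))) ∂P)
        ≤ ENNReal.ofReal (Real.exp (l ^ 2 * ν ^ 2 / 2))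

open Real

section Aux

lemma exp_aux {z : ℝ} (hz1 : -(1/2) < z) (hz2 : z < 1/2) :
    Real.exp (-(z + z^2)) ≤ 1 - z := by
  have h1 : 0 < 1 - z := by linarith
  rcases le_or_gt 0 z with hz | hz
  · have hx : 0 ≤ z + z^2 := by nlinarith
    have h2 : 1 + (z + z^2) + (z + z^2)^2/2 ≤ Real.exp (z + z^2) := by
      have := Real.quadratic_le_exp_of_nonneg hx
      linarith
    have h3 : (0:ℝ) < 1 + (z + z^2) + (z + z^2)^2/2 := by nlinarith
    have h4 : Real.exp (-(z + z^2)) ≤ (1 + (z + z^2) + (z + z^2)^2/2)⁻¹ := by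
      rw [Real.exp_neg]
      exact inv_anti₀ h3 h2
    refine h4.trans ?_
    rw [inv_le_iff_one_le_mul₀ h3]  -- maybe wrong name
    nlinarith
  · have h2 : 1 + (z + z^2) ≤ Real.exp (z + z^2) := by
      have := Real.add_one_le_exp (z + z^2)
      linarith
    have h3 : (0:ℝ) < 1 + (z + z^2) := by nlinarith
    have h4 : Real.exp (-(z + z^2)) ≤ (1 + (z + z^2))⁻¹ := by
      rw [Real.exp_neg]
      exact inv_anti₀ h3 h2
    refine h4.trans ?_
    rw [inv_le_iff_one_le_mul₀ h3]
    nlinarith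

lemma key_ineq {l p : ℝ} (hl1 : -(1/4) < l) (hl2 : l < 1/4) (hp0 : 0 ≤ p) (hp1 : p ≤ 1) :
    Real.exp (-(l * p)) * (p * (Real.sqrt (1 - 2*l))⁻¹ + (1 - p)) ≤ Real.exp (2 * l^2) := by
  have h2l : 0 < 1 - 2*l := by linarith
  set s := Real.sqrt (1 - 2*l) with hs_def
  have hs : 0 < s := Real.sqrt_pos.mpr h2l
  set g := s⁻¹ with hg_def
  have hg : 0 < g := inv_pos.mpr hs
  have hsle : s ≤ 1 - l := by
    have h1 : (1 - 2*l) ≤ (1-l)^2 := by nlinarith [sq_nonneg l]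
    calc s ≤ Real.sqrt ((1-l)^2) := Real.sqrt_le_sqrt h1
    _ = 1 - l := by rw [Real.sqrt_sq (by linarith)]
  set c := p * g + (1 - p) with hc_def
  have hc : 0 < c := by
    rcases eq_or_lt_of_le hp1 with rfl | h
    · simpa [hc_def] using hg
    · nlinarith [mul_nonneg hp0 hg.le]
  -- Step D : log g ≤ l + 2 l^2
  have hD : Real.log g ≤ l + 2*l^2 := by
    have hlog : Real.log g = -(1/2) * Real.log (1 - 2*l) := by
      rw [hg_def, Real.log_inv, hs_def, Real.log_sqrt h2l.le]
      ring
    have hexp : Real.exp (-(2*l) - (2*l)^2) ≤ 1 - 2*l := by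
      have := exp_aux (z := 2*l) (by linarith) (by linarith)
      convert this using 2
      ring
    have hlb : -(2*l) - (2*l)^2 ≤ Real.log (1 - 2*l) :=
      (Real.le_log_iff_exp_le h2l).mpr hexp
    rw [hlog]; nlinarith
  -- Step A+C : log c ≤ log g - (1-p) * l
  have hA : Real.log c ≤ Real.log g - (1 - p) * l := by
    have h1 : Real.log (c / g) ≤ c / g - 1 :=
      Real.log_le_sub_one_of_pos (by positivity)
    have h2 : Real.log (c / g) = Real.log c - Real.log g :=
      Real.log_div hc.ne' hg.ne'
    have h3 : c / g - 1 = (1 - p) * (s - 1) := by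
      rw [hc_def, hg_def]
      field_simp
      ring
    have h4 : (1 - p) * (s - 1) ≤ (1 - p) * (-l) := by
      apply mul_le_mul_of_nonneg_left (by linarith) (by linarith)
    nlinarith [h1, h2.symm.le]
  have hcle : c ≤ Real.exp (l * p + 2 * l^2) := by
    rw [← Real.exp_log hc]
    apply Real.exp_le_exp.mpr
    nlinarith
  calc Real.exp (-(l*p)) * c ≤ Real.exp (-(l*p)) * Real.exp (l * p + 2 * l^2) :=
        mul_le_mul_of_nonneg_left hcle (Real.exp_pos _).le
    _ = Real.exp (2 * l^2) := by rw [← Real.exp_add]; ring_nf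

lemma gaussianPDFReal_zero_one (x : ℝ) :
    gaussianPDFReal 0 1 x = (Real.sqrt (2 * π))⁻¹ * Real.exp (-(1/2) * x^2) := by
  simp only [gaussianPDFReal, NNReal.coe_one, mul_one, sub_zero]
  ring_nf

-- general helper
lemma lintegral_gaussianReal_ofReal (f : ℝ → ℝ) (hf : Measurable f) (hnn : ∀ x, 0 ≤ f x)
    (hint : Integrable (fun x => gaussianPDFReal 0 1 x * f x)) :
    ∫⁻ x, ENNReal.ofReal (f x) ∂(gaussianReal 0 1)
      = ENNReal.ofReal (∫ x, gaussianPDFReal 0 1 x * f x) := by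
  rw [gaussianReal_of_var_ne_zero 0 one_ne_zero,
    lintegral_withDensity_eq_lintegral_mul _ (measurable_gaussianPDF 0 1)
      (hf.ennreal_ofReal)]
  rw [ofReal_integral_eq_lintegral_ofReal hint
    (ae_of_all _ (fun x => mul_nonneg (gaussianPDFReal_nonneg 0 1 x) (hnn x)))]
  congr 1
  ext x
  simp only [Pi.mul_apply, gaussianPDF_def]
  rw [ENNReal.ofReal_mul (gaussianPDFReal_nonneg 0 1 x)]

lemma integral_pdf_exp (l : ℝ) (hl : l < 1/2) :
    ∫ x, gaussianPDFReal 0 1 x * Real.exp (l * x^2)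
      = (Real.sqrt (1 - 2*l))⁻¹ := by
  have hb : 0 < 1/2 - l := by linarith
  have heq : ∀ x : ℝ, gaussianPDFReal 0 1 x * Real.exp (l * x^2)
      = (Real.sqrt (2 * π))⁻¹ * Real.exp (-(1/2 - l) * x^2) := by
    intro x
    rw [gaussianPDFReal_zero_one, mul_assoc, ← Real.exp_add]
    ring_nf
  simp_rw [heq]
  rw [integral_const_mul, integral_gaussian]
  have hπ : (0:ℝ) < π := Real.pi_pos
  rw [← Real.sqrt_inv, ← Real.sqrt_mul (by positivity),
    ← Real.sqrt_inv (1 - 2*l)]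
  congr 1
  rw [eq_comm, inv_eq_iff_eq_inv, eq_comm]
  field_simp

lemma lintegral_exp_sq_gaussian (l : ℝ) (hl : l < 1/2) :
    ∫⁻ x, ENNReal.ofReal (Real.exp (l * x^2)) ∂(gaussianReal 0 1)
      = ENNReal.ofReal ((Real.sqrt (1 - 2*l))⁻¹) := by
  have hb : 0 < 1/2 - l := by linarith
  rw [lintegral_gaussianReal_ofReal _ (by fun_prop) (fun x => (Real.exp_pos _).le) ?hint,
    integral_pdf_exp l hl]
  case hint =>
    have heq : ∀ x : ℝ, gaussianPDFReal 0 1 x * Real.exp (l * x^2)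
        = (Real.sqrt (2 * π))⁻¹ * Real.exp (-(1/2 - l) * x^2) := by
      intro x
      rw [gaussianPDFReal_zero_one, mul_assoc, ← Real.exp_add]
      ring_nf
    simp_rw [heq]
    exact (integrable_exp_neg_mul_sq hb).const_mul _

lemma integrable_sq_mul_exp : Integrable (fun x : ℝ => x^2 * Real.exp (-(1/2) * x^2)) := by
  have h := integrable_rpow_mul_exp_neg_mul_sq (b := 1/2) (by norm_num) (s := 2) (by norm_num)
  have : ∀ x : ℝ, x ^ (2:ℝ) = x ^ 2 := fun x => by
    rw [show (2:ℝ) = ((2:ℕ):ℝ) by norm_num, Real.rpow_natCast]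
  simpa [this] using h

lemma integrable_id_mul_exp : Integrable (fun x : ℝ => x * Real.exp (-(1/2) * x^2)) := by
  have h := integrable_rpow_mul_exp_neg_mul_sq (b := 1/2) (by norm_num) (s := 1) (by norm_num)
  simpa using h

lemma integral_sq_exp : ∫ x : ℝ, x^2 * Real.exp (-(1/2) * x^2) = Real.sqrt (2 * π) := by
  have hu : ∀ x : ℝ, HasDerivAt (fun y : ℝ => y) 1 x := fun x => hasDerivAt_id x
  have hv : ∀ x : ℝ, HasDerivAt (fun y : ℝ => -Real.exp (-(1/2) * y^2))
      (x * Real.exp (-(1/2) * x^2)) x := by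
    intro x
    have h1 : HasDerivAt (fun y : ℝ => -(1/2) * y^2) (-(1/2) * (2 * x)) x := by
      simpa using ((hasDerivAt_pow 2 x).const_mul (-(1/2):ℝ))
    have h2 : HasDerivAt (fun y : ℝ => -Real.exp (-(1/2) * y^2))
        (-(Real.exp (-(1/2) * x^2) * (-(1/2) * (2 * x)))) x := (h1.exp).neg
    convert h2 using 1
    ring
  have huv' : Integrable ((fun y : ℝ => y) * fun x => x * Real.exp (-(1/2) * x^2)) := by
    have := integrable_sq_mul_exp
    apply this.congr
    filter_upwards with x
    simp [Pi.mul_apply]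
    ring
  have hu'v : Integrable ((fun _ : ℝ => (1:ℝ)) * fun y : ℝ => -Real.exp (-(1/2) * y^2)) := by
    have := (integrable_exp_neg_mul_sq (b := 1/2) (by norm_num)).neg
    apply this.congr
    filter_upwards with x
    simp [Pi.mul_apply]
  have huv : Integrable ((fun y : ℝ => y) * fun y : ℝ => -Real.exp (-(1/2) * y^2)) := by
    have := integrable_id_mul_exp.neg
    apply this.congr
    filter_upwards with x
    simp [Pi.mul_apply]
  have := MeasureTheory.integral_mul_deriv_eq_deriv_mul_of_integrable (fun x _ => hu x) (fun x _ => hv x) huv' hu'v huv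
  have h2 : ∫ x : ℝ, x * (x * Real.exp (-(1/2) * x^2))
      = - ∫ x : ℝ, 1 * -Real.exp (-(1/2) * x^2) := this
  have h3 : ∫ x : ℝ, x * (x * Real.exp (-(1/2) * x^2))
      = ∫ x : ℝ, x^2 * Real.exp (-(1/2) * x^2) := by
    congr 1; ext x; ring
  have h4 : ∫ x : ℝ, 1 * -Real.exp (-(1/2) * x^2) = - ∫ x : ℝ, Real.exp (-(1/2) * x^2) := by
    rw [← integral_neg]; congr 1; ext x; ring
  rw [h3, h4, neg_neg] at h2
  rw [h2, integral_gaussian]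
  congr 1
  rw [div_div_eq_mul_div, div_one, mul_comm]

lemma integral_pdf_sq : ∫ x, gaussianPDFReal 0 1 x * x^2 = 1 := by
  have heq : ∀ x : ℝ, gaussianPDFReal 0 1 x * x^2
      = (Real.sqrt (2 * π))⁻¹ * (x^2 * Real.exp (-(1/2) * x^2)) := by
    intro x
    rw [gaussianPDFReal_zero_one]
    ring
  simp_rw [heq]
  rw [integral_const_mul, integral_sq_exp]
  rw [inv_mul_cancel₀ (by positivity)]

lemma integrable_pdf_mul_sq : Integrable (fun x => gaussianPDFReal 0 1 x * x^2) := by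
  have heq : ∀ x : ℝ, gaussianPDFReal 0 1 x * x^2
      = (Real.sqrt (2 * π))⁻¹ * (x^2 * Real.exp (-(1/2) * x^2)) := by
    intro x
    rw [gaussianPDFReal_zero_one]
    ring
  simp_rw [heq]
  exact integrable_sq_mul_exp.const_mul _

lemma lintegral_sq_gaussian :
    ∫⁻ x, ENNReal.ofReal (x^2) ∂(gaussianReal 0 1) = 1 := by
  rw [lintegral_gaussianReal_ofReal (fun x => x^2) (by fun_prop) (fun x => sq_nonneg x)
    integrable_pdf_mul_sq, integral_pdf_sq, ENNReal.ofReal_one]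

lemma integrable_sq_gaussian : Integrable (fun x : ℝ => x^2) (gaussianReal 0 1) := by
  refine ⟨(by fun_prop : Measurable fun x : ℝ => x^2).aestronglyMeasurable, ?_⟩
  rw [hasFiniteIntegral_iff_ofReal (ae_of_all _ fun x => sq_nonneg x), lintegral_sq_gaussian]
  exact ENNReal.one_lt_top

lemma integral_sq_gaussian : ∫ x, x^2 ∂(gaussianReal 0 1) = 1 := by
  rw [integral_eq_lintegral_of_nonneg_ae (ae_of_all _ fun x => sq_nonneg x)
    (by fun_prop : Measurable fun x : ℝ => x^2).aestronglyMeasurable, lintegral_sq_gaussian]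
  simp

end Aux

/-- If `X` is standard normal, `A` is an event independent of `X`, then `X² ⋅ 1_A` is
sub-exponential with parameters `(2, 4)`. -/
theorem isSubExponential_sq_mul_indicator
    {Ω : Type*} [MeasurableSpace Ω] (P : Measure Ω) [IsProbabilityMeasure P]
    (X : Ω → ℝ) (hXm : Measurable X)
    (hX : Measure.map X P = gaussianReal 0 1)
    (A : Set Ω) (hA : MeasurableSet A)
    (hindep : IndepFun X (A.indicator (fun _ => (1 : ℝ))) P) :
    IsSubExponential P (fun ω => X ω ^ 2 * A.indicator (fun _ => (1 : ℝ)) ω) 2 4 := by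
  classical
  set I : Ω → ℝ := A.indicator (fun _ => (1 : ℝ)) with hI_def
  have hIm : Measurable I := measurable_const.indicator hA
  set Y : Ω → ℝ := fun ω => X ω ^ 2 * I ω with hY_def
  have hYm : Measurable Y := (hXm.pow_const 2).mul hIm
  have hI01 : ∀ ω, 0 ≤ I ω ∧ I ω ≤ 1 := by
    intro ω
    by_cases h : ω ∈ A <;> simp [hI_def, Set.indicator_apply, h]
  have hX2int : Integrable (fun ω => X ω ^ 2) P := by
    have h1 : Integrable (fun x : ℝ => x ^ 2) (Measure.map X P) := by
      rw [hX]; exact integrable_sq_gaussian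
    exact (integrable_map_measure
      (by fun_prop : Measurable fun x : ℝ => x^2).aestronglyMeasurable
      hXm.aemeasurable).mp h1
  have hYint : Integrable Y P := by
    refine hX2int.mono' hYm.aestronglyMeasurable ?_
    filter_upwards with ω
    have h := hI01 ω
    rw [hY_def, Real.norm_eq_abs, abs_mul, abs_of_nonneg h.1, abs_of_nonneg (sq_nonneg (X ω))]
    nlinarith [sq_nonneg (X ω)]
  have hEX2 : ∫ ω, X ω ^ 2 ∂P = 1 := by
    rw [← integral_sq_gaussian, ← hX,
      integral_map hXm.aemeasurable
        (by fun_prop : Measurable fun x : ℝ => x^2).aestronglyMeasurable]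
  set p : ℝ := (P A).toReal with hp_def
  have hp0 : 0 ≤ p := ENNReal.toReal_nonneg
  have hPA1 : P A ≤ 1 := prob_le_one
  have hp1 : p ≤ 1 := by
    rw [hp_def]
    exact ENNReal.toReal_le_of_le_ofReal zero_le_one (by simpa using hPA1)
  have hEI : ∫ ω, I ω ∂P = p := by
    rw [hI_def, integral_indicator_const (1:ℝ) hA]
    simp [hp_def, measureReal_def]
  have hindep2 : IndepFun (fun ω => X ω ^ 2) I P :=
    hindep.comp (measurable_id.pow_const 2) measurable_id
  have hEY : ∫ ω, Y ω ∂P = p := by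
    have h := hindep2.integral_mul_eq_mul_integral (hXm.pow_const 2).aestronglyMeasurable
      hIm.aestronglyMeasurable
    calc ∫ ω, Y ω ∂P = ∫ ω, ((fun ω => X ω ^ 2) * I) ω ∂P := rfl
    _ = (∫ ω, X ω ^ 2 ∂P) * ∫ ω, I ω ∂P := h
    _ = p := by rw [hEX2, hEI, one_mul]
  refine ⟨by norm_num, by norm_num, hYm, hYint, ?_⟩
  intro l hl
  obtain ⟨hl1, hl2⟩ := hl
  rw [hEY]
  set g : ℝ := (Real.sqrt (1 - 2*l))⁻¹ with hg_def
  have hg0 : 0 ≤ g := by positivity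
  -- split the exponential
  have hsplit : ∀ ω, ENNReal.ofReal (Real.exp (l * (Y ω - p)))
      = ENNReal.ofReal (Real.exp (l * Y ω)) * ENNReal.ofReal (Real.exp (-(l * p))) := by
    intro ω
    rw [show l * (Y ω - p) = l * Y ω + -(l*p) by ring, Real.exp_add,
      ENNReal.ofReal_mul (Real.exp_pos _).le]
  rw [lintegral_congr hsplit,
    lintegral_mul_const _ (by fun_prop : Measurable fun ω => ENNReal.ofReal (Real.exp (l * Y ω)))]
  -- compute ∫⁻ exp(l Y)
  set F : ℝ → ENNReal := fun x => ENNReal.ofReal (Real.exp (l * x^2)) with hF_def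
  set G : ℝ → ENNReal := fun y => ENNReal.ofReal y with hG_def
  have hFm : Measurable F := by fun_prop
  have hGm : Measurable G := by fun_prop
  have hpoint : ∀ ω, ENNReal.ofReal (Real.exp (l * Y ω))
      = F (X ω) * G (I ω) + Aᶜ.indicator (1 : Ω → ENNReal) ω := by
    intro ω
    by_cases h : ω ∈ A
    · have hIω : I ω = 1 := by simp [hI_def, Set.indicator_of_mem h]
      simp [hY_def, hIω, hF_def, hG_def, Set.indicator_of_notMem (by simpa using h : ω ∉ Aᶜ)]
    · have hIω : I ω = 0 := by simp [hI_def, Set.indicator_of_notMem h]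
      simp [hY_def, hIω, hF_def, hG_def, Set.indicator_of_mem (by simpa using h : ω ∈ Aᶜ)]
  rw [lintegral_congr hpoint,
    lintegral_add_left (show Measurable fun ω => F (X ω) * G (I ω) from
      (hFm.comp hXm).mul (hGm.comp hIm)),
    lintegral_indicator_one hA.compl]
  have hprod : ∫⁻ ω, F (X ω) * G (I ω) ∂P
      = (∫⁻ ω, F (X ω) ∂P) * ∫⁻ ω, G (I ω) ∂P :=
    lintegral_mul_eq_lintegral_mul_lintegral_of_indepFun (hFm.comp hXm) (hGm.comp hIm)
      (hindep.comp hFm hGm)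
  rw [hprod]
  have hFX : ∫⁻ ω, F (X ω) ∂P = ENNReal.ofReal g := by
    rw [← lintegral_map hFm hXm, hX, hF_def]
    exact lintegral_exp_sq_gaussian l (by linarith)
  have hGI : ∫⁻ ω, G (I ω) ∂P = P A := by
    have : ∀ ω, G (I ω) = A.indicator (1 : Ω → ENNReal) ω := by
      intro ω
      by_cases h : ω ∈ A <;>
        simp [hG_def, hI_def, Set.indicator_apply, h]
    rw [lintegral_congr this, lintegral_indicator_one hA]
  rw [hFX, hGI, measure_compl hA (measure_ne_top P A), measure_univ]
  have hPA : P A = ENNReal.ofReal p := (ENNReal.ofReal_toReal (measure_ne_top P A)).symm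
  have hcompl : (1 : ENNReal) - P A = ENNReal.ofReal (1 - p) := by
    rw [hPA, ENNReal.ofReal_sub _ hp0, ENNReal.ofReal_one]
  rw [hcompl, hPA, ← ENNReal.ofReal_mul hg0,
    ← ENNReal.ofReal_add (mul_nonneg hg0 hp0) (by linarith),
    ← ENNReal.ofReal_mul (add_nonneg (mul_nonneg hg0 hp0) (by linarith))]
  apply ENNReal.ofReal_le_ofReal
  have hkey := key_ineq hl1 hl2 hp0 hp1
  calc (g * p + (1 - p)) * Real.exp (-(l*p))
      = Real.exp (-(l*p)) * (p * g + (1-p)) := by ring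
  _ ≤ Real.exp (2*l^2) := hkey
  _ = Real.exp (l^2 * 2^2 / 2) := by congr 1; ring
end

section
/- Let X₁,...,Xₙ be normal random variables with Var[Xᵢ] = σᵢ² and let A₁,...,Aₙ be events such that X₁,...,Xₙ, 1_{A₁},...,1_{Aₙ} are all independent. Then Σᵢ |Xᵢ - E[Xᵢ]|² 1_{Aᵢ} is sub-exponential with parameters (2(Σᵢ σᵢ⁴)^{1/2}, 4 max{σ₁²,...,σₙ²}). -/
open MeasureTheory ProbabilityTheory

open Real Set Filter

section AuxLemmas

lemma aux_exp_le (u : ℝ) (hu : |u| ≤ 1/2) : Real.exp (-(u + u^2)) ≤ 1 - u := by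
  rw [abs_le] at hu
  rcases le_or_gt u 0 with h | h
  · have h1 : 1 + (u + u^2) ≤ Real.exp (u + u^2) := by
      have := Real.add_one_le_exp (u + u^2); linarith
    have h2 : (0:ℝ) < 1 + (u + u^2) := by nlinarith [hu.1]
    have h3 : Real.exp (-(u + u^2)) ≤ (1 + (u + u^2))⁻¹ := by
      rw [Real.exp_neg]
      exact inv_anti₀ h2 h1
    have h4 : (1 + (u + u^2))⁻¹ ≤ 1 - u := by
      rw [inv_le_iff_one_le_mul₀ h2]
      nlinarith
    linarith
  · have hq : 1 + (u + u^2) + (u + u^2)^2/2 ≤ Real.exp (u + u^2) :=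
      Real.quadratic_le_exp_of_nonneg (by positivity)
    have h2 : 1 ≤ (1 - u) * Real.exp (u + u^2) := by nlinarith [hu.2, h.le]
    have h3 := Real.exp_pos (u + u^2)
    have h4 : Real.exp (-(u + u^2)) * Real.exp (u + u^2) = 1 := by
      rw [← Real.exp_add, show -(u+u^2)+(u+u^2) = 0 by ring, Real.exp_zero]
    nlinarith [Real.exp_pos (-(u + u^2))]


lemma aux_sqrt_exp (t : ℝ) (ht : |t| < 1/4) :
    (Real.sqrt (1 - 2*t))⁻¹ * Real.exp (-t) ≤ Real.exp (2*t^2) := by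
  rw [abs_lt] at ht
  have h1 : Real.exp (-(2*t + (2*t)^2)) ≤ 1 - 2*t := by
    have := aux_exp_le (2*t) (by rw [abs_le]; constructor <;> linarith)
    linarith
  have hsq : Real.exp (-(t + 2*t^2))^2 = Real.exp (-(2*t + (2*t)^2)) := by
    rw [sq, ← Real.exp_add]; congr 1; ring
  have h2 : Real.exp (-(t + 2*t^2)) ≤ Real.sqrt (1 - 2*t) := by
    rw [show (1 - 2*t) = Real.sqrt (1-2*t)^2 from (Real.sq_sqrt (by linarith)).symm] at h1
    have := Real.sqrt_le_sqrt (hsq ▸ h1 : Real.exp (-(t + 2*t^2))^2 ≤ Real.sqrt (1-2*t)^2)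
    rwa [Real.sqrt_sq (Real.exp_pos _).le, Real.sqrt_sq (Real.sqrt_nonneg _)] at this
  have hs : 0 < Real.sqrt (1 - 2*t) := Real.sqrt_pos.mpr (by linarith)
  have h3 : (Real.sqrt (1 - 2*t))⁻¹ ≤ Real.exp (t + 2*t^2) := by
    rw [inv_le_iff_one_le_mul₀ hs]
    calc (1:ℝ) = Real.exp (t + 2*t^2) * Real.exp (-(t+2*t^2)) := by
          rw [← Real.exp_add, show t+2*t^2+ -(t+2*t^2) = 0 by ring, Real.exp_zero]
      _ ≤ Real.exp (t + 2*t^2) * Real.sqrt (1-2*t) :=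
          mul_le_mul_of_nonneg_left h2 (Real.exp_pos _).le
  calc (Real.sqrt (1 - 2*t))⁻¹ * Real.exp (-t)
      ≤ Real.exp (t + 2*t^2) * Real.exp (-t) :=
        mul_le_mul_of_nonneg_right h3 (Real.exp_pos _).le
    _ = Real.exp (2*t^2) := by rw [← Real.exp_add]; congr 1; ring

lemma aux_key (p t : ℝ) (hp0 : 0 ≤ p) (hp1 : p ≤ 1) (ht : |t| < 1/4) :
    Real.exp (-(p*t)) * (1 + p * ((Real.sqrt (1 - 2*t))⁻¹ - 1)) ≤ Real.exp (2*t^2) := by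
  have ht' := abs_lt.mp ht
  have hs : 0 < Real.sqrt (1 - 2*t) := Real.sqrt_pos.mpr (by linarith)
  set M : ℝ := (Real.sqrt (1 - 2*t))⁻¹ with hM
  have hM0 : 0 < M := inv_pos.mpr hs
  have step1 : 1 ≤ M * (1 - t) := by
    have h1 : Real.sqrt (1 - 2*t) ≤ 1 - t := by
      have := Real.sqrt_le_sqrt (show 1 - 2*t ≤ (1-t)^2 by nlinarith [sq_nonneg t])
      rwa [Real.sqrt_sq (by linarith)] at this
    rw [hM, inv_mul_eq_div, le_div_iff₀ hs, one_mul]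
    exact h1
  have step2 : 1 + p * (M - 1) ≤ M * (1 + (p-1)*t) := by
    nlinarith [mul_nonneg (sub_nonneg.mpr hp1) (sub_nonneg.mpr step1)]
  have step3 : 1 + (p-1)*t ≤ Real.exp ((p-1)*t) := by
    have := Real.add_one_le_exp ((p-1)*t); linarith
  calc Real.exp (-(p*t)) * (1 + p * (M - 1))
      ≤ Real.exp (-(p*t)) * (M * Real.exp ((p-1)*t)) := by
        refine mul_le_mul_of_nonneg_left ?_ (Real.exp_pos _).le
        calc 1 + p * (M - 1) ≤ M * (1 + (p-1)*t) := step2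
          _ ≤ M * Real.exp ((p-1)*t) := mul_le_mul_of_nonneg_left step3 hM0.le
    _ = M * Real.exp (-t) := by
        rw [mul_left_comm, ← Real.exp_add]; congr 2; ring
    _ ≤ Real.exp (2*t^2) := aux_sqrt_exp t ht

lemma aux_integral_odd (b : ℝ) : ∫ x : ℝ, x * Real.exp (-b*x^2) = 0 := by
  have h : (fun x : ℝ => (-x) * Real.exp (-b*(-x)^2)) = fun x => -(x * Real.exp (-b*x^2)) := by
    funext x; ring_nf
  have h2 := MeasureTheory.integral_neg_eq_self (fun x : ℝ => x * Real.exp (-b*x^2)) volume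
  rw [h] at h2
  rw [integral_neg] at h2
  linarith

lemma aux_tendsto_mul_exp (b : ℝ) (hb : 0 < b) :
    Tendsto (fun y : ℝ => y * Real.exp (-b*y^2)) atTop (nhds 0) := by
  refine squeeze_zero_norm' (a := fun y : ℝ => y * Real.exp (-y)) ?_ ?_
  · filter_upwards [Filter.eventually_ge_atTop (max 1 (1/b))] with y hy
    have hy1 : (1:ℝ) ≤ y := le_trans (le_max_left _ _) hy
    have hyb : 1/b ≤ y := le_trans (le_max_right _ _) hy
    have h1 : y ≤ b * y^2 := by
      have : 1 ≤ b * y := by rw [div_le_iff₀ hb] at hyb; linarith [hyb]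
      nlinarith
    have h2 : Real.exp (-b*y^2) ≤ Real.exp (-y) := by
      apply Real.exp_le_exp.mpr; linarith
    rw [norm_mul, Real.norm_eq_abs, Real.norm_eq_abs, abs_of_nonneg (by linarith : (0:ℝ) ≤ y),
      abs_of_pos (Real.exp_pos _)]
    exact mul_le_mul_of_nonneg_left h2 (by linarith)
  · simpa using Real.tendsto_pow_mul_exp_neg_atTop_nhds_zero 1

lemma aux_rpow_two (x : ℝ) : x ^ (2:ℝ) = x^2 := by
  rw [show (2:ℝ) = ((2:ℕ):ℝ) by norm_num, Real.rpow_natCast]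

lemma aux_integrable_sq_exp (b : ℝ) (hb : 0 < b) :
    Integrable (fun x : ℝ => x^2 * Real.exp (-b*x^2)) := by
  have := integrable_rpow_mul_exp_neg_mul_sq hb (by norm_num : (-1:ℝ) < 2)
  simpa [aux_rpow_two] using this

lemma aux_integral_sq_exp (b : ℝ) (hb : 0 < b) :
    ∫ x : ℝ, x^2 * Real.exp (-b*x^2) = Real.sqrt (π/b) / (2*b) := by
  have hF : ∀ y ∈ Set.Ioi (0:ℝ), HasDerivAt (fun y : ℝ => -(y * Real.exp (-b*y^2)) / (2*b))
      (y^2 * Real.exp (-b*y^2) - Real.exp (-b*y^2) / (2*b)) y := by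
    intro y _
    have h1 : HasDerivAt (fun y : ℝ => -b*y^2) (-b*(2*y)) y := by
      simpa using ((hasDerivAt_pow 2 y).const_mul (-b))
    have h2 : HasDerivAt (fun y : ℝ => Real.exp (-b*y^2)) (Real.exp (-b*y^2) * (-b*(2*y))) y :=
      h1.exp
    have h3 : HasDerivAt (fun y : ℝ => y * Real.exp (-b*y^2))
        (1 * Real.exp (-b*y^2) + y * (Real.exp (-b*y^2) * (-b*(2*y)))) y :=
      (hasDerivAt_id y).mul h2
    have h4 := (h3.neg).div_const (2*b)
    refine h4.congr_deriv ?_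
    field_simp
    ring
  have hint : IntegrableOn
      (fun y : ℝ => y^2 * Real.exp (-b*y^2) - Real.exp (-b*y^2) / (2*b)) (Set.Ioi 0) := by
    exact ((aux_integrable_sq_exp b hb).sub
      ((integrable_exp_neg_mul_sq hb).div_const (2*b))).integrableOn
  have htends : Tendsto (fun y : ℝ => -(y * Real.exp (-b*y^2)) / (2*b)) atTop (nhds 0) := by
    have := ((aux_tendsto_mul_exp b hb).neg).div_const (2*b)
    simpa using this
  have key := integral_Ioi_of_hasDerivAt_of_tendsto
    (f := fun y : ℝ => -(y * Real.exp (-b*y^2)) / (2*b))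
    (f' := fun y : ℝ => y^2 * Real.exp (-b*y^2) - Real.exp (-b*y^2) / (2*b))
    (a := 0) (m := 0) (Continuous.continuousWithinAt (by continuity)) hF hint htends
  simp only [neg_zero, zero_mul, mul_zero, zero_div, sub_zero, zero_sub, neg_neg] at key
  -- key : ∫ y in Ioi 0, (y^2 * exp(-b y²) - exp(-b y²)/(2b)) = 0 - 0 = 0ish
  have hsplit : ∫ y in Set.Ioi (0:ℝ), (y^2 * Real.exp (-b*y^2) - Real.exp (-b*y^2) / (2*b))
      = (∫ y in Set.Ioi (0:ℝ), y^2 * Real.exp (-b*y^2))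
        - ∫ y in Set.Ioi (0:ℝ), Real.exp (-b*y^2) / (2*b) := by
    exact integral_sub ((aux_integrable_sq_exp b hb).integrableOn)
      (((integrable_exp_neg_mul_sq hb).div_const (2*b)).integrableOn)
  have hgauss : ∫ y in Set.Ioi (0:ℝ), Real.exp (-b*y^2) / (2*b)
      = Real.sqrt (π/b) / 2 / (2*b) := by
    rw [integral_div, integral_gaussian_Ioi]
  have hIoi : ∫ y in Set.Ioi (0:ℝ), y^2 * Real.exp (-b*y^2) = Real.sqrt (π/b) / (4*b) := by
    have : (∫ y in Set.Ioi (0:ℝ), y^2 * Real.exp (-b*y^2))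
        - Real.sqrt (π/b) / 2 / (2*b) = 0 := by
      rw [← hgauss, ← hsplit]; linarith [key]
    have h' := this
    rw [sub_eq_zero] at h'; rw [h']; ring
  have habs : (fun x : ℝ => x^2 * Real.exp (-b*x^2))
      = fun x : ℝ => |x|^2 * Real.exp (-b*|x|^2) := by
    funext x; rw [sq_abs]
  rw [habs, integral_comp_abs (f := fun x : ℝ => x^2 * Real.exp (-b*x^2)), hIoi]
  field_simp
  ring

lemma aux_gauss_pdf_meas (μ : ℝ) (v : NNReal) :
    Measurable (fun x => (gaussianPDFReal μ v x).toNNReal) :=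
  (measurable_gaussianPDFReal μ v).real_toNNReal

lemma aux_gauss_withDensity (μ : ℝ) (v : NNReal) (hv : v ≠ 0) :
    gaussianReal μ v
      = volume.withDensity (fun x => ((gaussianPDFReal μ v x).toNNReal : ENNReal)) := by
  rw [gaussianReal_of_var_ne_zero _ hv]
  rfl

lemma aux_gauss_integral (μ : ℝ) (v : NNReal) (hv : v ≠ 0) (f : ℝ → ℝ) :
    ∫ x, f x ∂(gaussianReal μ v) = ∫ x, gaussianPDFReal μ v x * f x := by
  rw [aux_gauss_withDensity μ v hv,
    integral_withDensity_eq_integral_smul (aux_gauss_pdf_meas μ v) f]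
  congr 1; funext x
  rw [NNReal.smul_def, smul_eq_mul, Real.coe_toNNReal _ (gaussianPDFReal_nonneg μ v x)]

lemma aux_gauss_integrable_iff (μ : ℝ) (v : NNReal) (hv : v ≠ 0) (f : ℝ → ℝ) :
    Integrable f (gaussianReal μ v)
      ↔ Integrable (fun x => gaussianPDFReal μ v x * f x) volume := by
  rw [aux_gauss_withDensity μ v hv,
    integrable_withDensity_iff_integrable_smul (aux_gauss_pdf_meas μ v)]
  constructor <;> intro h <;> refine h.congr (Filter.Eventually.of_forall fun x => ?_) <;>
    simp only [NNReal.smul_def, smul_eq_mul,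
      Real.coe_toNNReal _ (gaussianPDFReal_nonneg μ v x)]

lemma aux_bpos (V l : ℝ) (hV : 0 < V) (hl : 2*l*V < 1) : (0:ℝ) < (2*V)⁻¹ - l := by
  rw [sub_pos, inv_eq_one_div, lt_div_iff₀ (by linarith)]; linarith

lemma aux_norm (V l : ℝ) (hV : 0 < V) (hl : 2*l*V < 1) :
    (Real.sqrt (2*π*V))⁻¹ * Real.sqrt (π / ((2*V)⁻¹ - l)) = (Real.sqrt (1 - 2*l*V))⁻¹ := by
  have hπ := Real.pi_pos
  have hb := aux_bpos V l hV hl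
  have h2πV : (0:ℝ) < 2*π*V := by positivity
  have h1 : π / ((2*V)⁻¹ - l) = (2*π*V) / (1 - 2*l*V) := by
    rw [div_eq_div_iff hb.ne' (by linarith : (1:ℝ) - 2*l*V ≠ 0)]
    field_simp
  rw [h1, Real.sqrt_div h2πV.le, div_eq_mul_inv]
  rw [← mul_assoc, inv_mul_cancel₀ (by positivity : Real.sqrt (2*π*V) ≠ 0), one_mul]

lemma aux_pdf_mul (μm : ℝ) (v : NNReal) (l : ℝ) (f : ℝ → ℝ) :
    (fun x => gaussianPDFReal μm v x * (Real.exp (l * (x - μm)^2) * f x))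
      = fun x => (Real.sqrt (2*π*(v:ℝ)))⁻¹
          * (Real.exp (-((2*(v:ℝ))⁻¹ - l) * (x - μm)^2) * f x) := by
  funext x
  rw [gaussianPDFReal, mul_assoc, ← mul_assoc (Real.exp _), ← Real.exp_add]
  congr 3
  rw [div_eq_mul_inv]
  ring

lemma aux_gauss_exp_sq_integrable (μm : ℝ) (v : NNReal) (hv : v ≠ 0) (l : ℝ)
    (hl : 2*l*(v:ℝ) < 1) :
    Integrable (fun x => Real.exp (l * (x - μm)^2)) (gaussianReal μm v) := by
  have hV : (0:ℝ) < (v:ℝ) := NNReal.coe_pos.mpr (pos_iff_ne_zero.mpr hv)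
  have hb := aux_bpos (v:ℝ) l hV hl
  rw [aux_gauss_integrable_iff μm v hv]
  have h1 : (fun x => gaussianPDFReal μm v x * Real.exp (l * (x - μm)^2))
      = fun x => (Real.sqrt (2*π*(v:ℝ)))⁻¹
          * (Real.exp (-((2*(v:ℝ))⁻¹ - l) * (x - μm)^2) * 1) := by
    have := aux_pdf_mul μm v l (fun _ => 1)
    simpa using this
  rw [h1]
  simp only [mul_one]
  exact (((integrable_exp_neg_mul_sq hb).comp_sub_right μm).const_mul _)

lemma aux_gauss_exp_sq (μm : ℝ) (v : NNReal) (hv : v ≠ 0) (l : ℝ)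
    (hl : 2*l*(v:ℝ) < 1) :
    ∫ x, Real.exp (l * (x - μm)^2) ∂(gaussianReal μm v)
      = (Real.sqrt (1 - 2*l*(v:ℝ)))⁻¹ := by
  have hV : (0:ℝ) < (v:ℝ) := NNReal.coe_pos.mpr (pos_iff_ne_zero.mpr hv)
  have hb := aux_bpos (v:ℝ) l hV hl
  rw [aux_gauss_integral μm v hv]
  have h1 : (fun x => gaussianPDFReal μm v x * Real.exp (l * (x - μm)^2))
      = fun x => (Real.sqrt (2*π*(v:ℝ)))⁻¹
          * Real.exp (-((2*(v:ℝ))⁻¹ - l) * (x - μm)^2) := by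
    have := aux_pdf_mul μm v l (fun _ => 1)
    simpa using this
  rw [h1, integral_const_mul]
  rw [integral_sub_right_eq_self (fun y => Real.exp (-((2*(v:ℝ))⁻¹ - l) * y^2)) μm]
  rw [integral_gaussian]
  exact aux_norm (v:ℝ) l hV hl

lemma aux_gauss_sq_integrable (μm : ℝ) (v : NNReal) (hv : v ≠ 0) :
    Integrable (fun x => (x - μm)^2) (gaussianReal μm v) := by
  have hV : (0:ℝ) < (v:ℝ) := NNReal.coe_pos.mpr (pos_iff_ne_zero.mpr hv)
  have hb : (0:ℝ) < (2*(v:ℝ))⁻¹ := by positivity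
  rw [aux_gauss_integrable_iff μm v hv]
  have h1 : (fun x => gaussianPDFReal μm v x * (x - μm)^2)
      = fun x => (Real.sqrt (2*π*(v:ℝ)))⁻¹
          * (Real.exp (-(2*(v:ℝ))⁻¹ * (x - μm)^2) * (x - μm)^2) := by
    have := aux_pdf_mul μm v 0 (fun x => (x - μm)^2)
    simpa using this
  rw [h1]
  have h2 : Integrable (fun x : ℝ => Real.exp (-(2*(v:ℝ))⁻¹ * (x-μm)^2) * (x-μm)^2) := by
    have h3 : Integrable (fun y : ℝ => Real.exp (-(2*(v:ℝ))⁻¹ * y^2) * y^2) := by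
      have := aux_integrable_sq_exp ((2*(v:ℝ))⁻¹) hb
      exact this.congr (Filter.Eventually.of_forall fun x => by ring)
    exact h3.comp_sub_right μm
  exact h2.const_mul _

lemma aux_gauss_sq (μm : ℝ) (v : NNReal) (hv : v ≠ 0) :
    ∫ x, (x - μm)^2 ∂(gaussianReal μm v) = (v:ℝ) := by
  have hV : (0:ℝ) < (v:ℝ) := NNReal.coe_pos.mpr (pos_iff_ne_zero.mpr hv)
  have hb : (0:ℝ) < (2*(v:ℝ))⁻¹ := by positivity
  rw [aux_gauss_integral μm v hv]
  have h1 : (fun x => gaussianPDFReal μm v x * (x - μm)^2)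
      = fun x => (Real.sqrt (2*π*(v:ℝ)))⁻¹
          * (Real.exp (-(2*(v:ℝ))⁻¹ * (x - μm)^2) * (x - μm)^2) := by
    have := aux_pdf_mul μm v 0 (fun x => (x - μm)^2)
    simpa using this
  rw [h1, integral_const_mul]
  rw [integral_sub_right_eq_self (fun y => Real.exp (-(2*(v:ℝ))⁻¹ * y^2) * y^2) μm]
  have h2 : ∫ y : ℝ, Real.exp (-(2*(v:ℝ))⁻¹ * y^2) * y^2
      = Real.sqrt (π/(2*(v:ℝ))⁻¹) / (2*(2*(v:ℝ))⁻¹) := by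
    rw [← aux_integral_sq_exp ((2*(v:ℝ))⁻¹) hb]
    congr 1; funext y; ring
  rw [h2]
  have h3 := aux_norm (v:ℝ) 0 hV (by linarith)
  simp only [mul_zero, zero_mul, sub_zero, Real.sqrt_one, inv_one] at h3
  have h4 : (2*(2*(v:ℝ))⁻¹) = (v:ℝ)⁻¹ := by field_simp
  rw [h4, div_eq_mul_inv, inv_inv, ← mul_assoc, h3, one_mul]

lemma aux_gauss_mean (μm : ℝ) (v : NNReal) (hv : v ≠ 0) :
    ∫ x, x ∂(gaussianReal μm v) = μm := by
  have hV : (0:ℝ) < (v:ℝ) := NNReal.coe_pos.mpr (pos_iff_ne_zero.mpr hv)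
  have hb : (0:ℝ) < (2*(v:ℝ))⁻¹ := by positivity
  rw [aux_gauss_integral μm v hv]
  have h1 : (fun x => gaussianPDFReal μm v x * x)
      = fun x => (Real.sqrt (2*π*(v:ℝ)))⁻¹
          * (Real.exp (-(2*(v:ℝ))⁻¹ * (x - μm)^2) * ((x - μm) + μm)) := by
    have := aux_pdf_mul μm v 0 (fun x => x)
    have h' := this
    funext x
    have := congrFun this x
    simpa using this
  rw [h1, integral_const_mul]
  rw [integral_sub_right_eq_self
    (fun y => Real.exp (-(2*(v:ℝ))⁻¹ * y^2) * (y + μm)) μm]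
  have hsplit : ∫ y : ℝ, Real.exp (-(2*(v:ℝ))⁻¹ * y^2) * (y + μm)
      = (∫ y : ℝ, y * Real.exp (-(2*(v:ℝ))⁻¹ * y^2))
        + μm * ∫ y : ℝ, Real.exp (-(2*(v:ℝ))⁻¹ * y^2) := by
    rw [← integral_const_mul μm, ← integral_add]
    · congr 1; funext y; ring
    · exact (integrable_mul_exp_neg_mul_sq hb).congr
        (Filter.Eventually.of_forall fun x => by ring)
    · exact (integrable_exp_neg_mul_sq hb).const_mul μm
  rw [hsplit, aux_integral_odd, integral_gaussian, zero_add, ← mul_assoc]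
  have h3 := aux_norm (v:ℝ) 0 hV (by linarith)
  simp only [mul_zero, zero_mul, sub_zero, Real.sqrt_one, inv_one] at h3
  linear_combination μm * h3

lemma aux_indepFun_pair {Ω : Type*} [MeasurableSpace Ω] {P : Measure Ω} {n : ℕ}
    (f : Fin n ⊕ Fin n → Ω → ℝ) (hmeas : ∀ k, Measurable (f k))
    (hindep : iIndepFun (m := fun _ : Fin n ⊕ Fin n => (inferInstance : MeasurableSpace ℝ)) f P)
    (c : Fin n → ℝ) (s : Finset (Fin n)) (i : Fin n) (hi : i ∉ s) :
    IndepFun (fun ω => (f (Sum.inl i) ω - c i)^2 * f (Sum.inr i) ω)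
      (fun ω => ∑ j ∈ s, (f (Sum.inl j) ω - c j)^2 * f (Sum.inr j) ω) P := by
  classical
  set S : Finset (Fin n ⊕ Fin n) := {Sum.inl i, Sum.inr i} with hS
  set T : Finset (Fin n ⊕ Fin n) := s.disjSum s with hT
  have hST : Disjoint S T := by
    rw [Finset.disjoint_left]
    intro k hk hkT
    rcases Finset.mem_insert.mp hk with rfl | hk
    · rw [hT, Finset.inl_mem_disjSum] at hkT; exact hi hkT
    · rw [Finset.mem_singleton] at hk; subst hk
      rw [hT, Finset.inr_mem_disjSum] at hkT; exact hi hkT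
  have hbase := hindep.indepFun_finset S T hST hmeas
  have hSl : (Sum.inl i : Fin n ⊕ Fin n) ∈ S := by simp [hS]
  have hSr : (Sum.inr i : Fin n ⊕ Fin n) ∈ S := by simp [hS]
  let φ : (S → ℝ) → ℝ := fun g => (g ⟨Sum.inl i, hSl⟩ - c i)^2 * g ⟨Sum.inr i, hSr⟩
  let ψ : (T → ℝ) → ℝ := fun g => ∑ j ∈ s.attach,
      (g ⟨Sum.inl j.1, by rw [hT, Finset.inl_mem_disjSum]; exact j.2⟩ - c j.1)^2
        * g ⟨Sum.inr j.1, by rw [hT, Finset.inr_mem_disjSum]; exact j.2⟩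
  have hφ : Measurable φ :=
    (((measurable_pi_apply _).sub_const _).pow_const 2).mul (measurable_pi_apply _)
  have hψ : Measurable ψ :=
    Finset.measurable_sum _ fun j _ =>
      (((measurable_pi_apply _).sub_const _).pow_const 2).mul (measurable_pi_apply _)
  have hcomp := hbase.comp hφ hψ
  have h1 : (φ ∘ fun a (j : S) => f j a)
      = fun ω => (f (Sum.inl i) ω - c i)^2 * f (Sum.inr i) ω := rfl
  have h2 : (ψ ∘ fun a (j : T) => f j a)
      = fun ω => ∑ j ∈ s, (f (Sum.inl j) ω - c j)^2 * f (Sum.inr j) ω := by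
    funext ω
    exact Finset.sum_attach s fun j => (f (Sum.inl j) ω - c j)^2 * f (Sum.inr j) ω
  rwa [h1, h2] at hcomp

lemma aux_sum_exp {Ω : Type*} [MeasurableSpace Ω] (P : Measure Ω) [IsProbabilityMeasure P]
    {n : ℕ} (Y : Fin n → Ω → ℝ)
    (hpair : ∀ (s : Finset (Fin n)) (i : Fin n), i ∉ s →
      IndepFun (Y i) (fun ω => ∑ j ∈ s, Y j ω) P)
    (l : ℝ) (hint : ∀ i, Integrable (fun ω => Real.exp (l * Y i ω)) P)
    (s : Finset (Fin n)) :
    Integrable (fun ω => Real.exp (l * ∑ j ∈ s, Y j ω)) P ∧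
    ∫ ω, Real.exp (l * ∑ j ∈ s, Y j ω) ∂P = ∏ j ∈ s, ∫ ω, Real.exp (l * Y j ω) ∂P := by
  classical
  induction s using Finset.induction_on with
  | empty => simp
  | @insert i s hi ih =>
    have hsum : (fun ω => Real.exp (l * ∑ j ∈ insert i s, Y j ω))
        = fun ω => Real.exp (l * Y i ω) * Real.exp (l * ∑ j ∈ s, Y j ω) := by
      funext ω
      rw [Finset.sum_insert hi, mul_add, Real.exp_add]
    have hmeasE : Measurable fun x : ℝ => Real.exp (l * x) :=
      (measurable_id.const_mul l).exp
    have hIndepExp : IndepFun (fun ω => Real.exp (l * Y i ω))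
        (fun ω => Real.exp (l * ∑ j ∈ s, Y j ω)) P :=
      (hpair s i hi).comp hmeasE hmeasE
    refine ⟨?_, ?_⟩
    · rw [hsum]
      exact hIndepExp.integrable_mul (hint i) ih.1
    · have hmul := hIndepExp.integral_fun_mul_eq_mul_integral (hint i).aestronglyMeasurable ih.1.aestronglyMeasurable
      have hmul' : ∫ ω, Real.exp (l * Y i ω) * Real.exp (l * ∑ j ∈ s, Y j ω) ∂P
          = (∫ ω, Real.exp (l * Y i ω) ∂P) * ∫ ω, Real.exp (l * ∑ j ∈ s, Y j ω) ∂P := hmul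
      rw [hsum, hmul', ih.2, Finset.prod_insert hi]

end AuxLemmas

/-- If `X₁, …, Xₙ` are normal with variances `σᵢ²` and `A₁, …, Aₙ` are events such that
`X₁, …, Xₙ, 1_{A₁}, …, 1_{Aₙ}` are all independent, then `Σᵢ |Xᵢ - E[Xᵢ]|² 1_{Aᵢ}` is
sub-exponential with parameters `(2 (Σᵢ σᵢ⁴)^{1/2}, 4 maxᵢ σᵢ²)`. -/
theorem isSubExponential_sum_sq_mul_indicator
    {Ω : Type*} [MeasurableSpace Ω] (P : Measure Ω) [IsProbabilityMeasure P]
    (n : ℕ) (hn : 0 < n) (σ μ : Fin n → ℝ) (hσ : ∀ i, σ i ≠ 0)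
    (X : Fin n → Ω → ℝ) (hXm : ∀ i, Measurable (X i))
    (A : Fin n → Set Ω) (hA : ∀ i, MeasurableSet (A i))
    (hlaw : ∀ i, Measure.map (X i) P = gaussianReal (μ i) (Real.toNNReal ((σ i) ^ 2)))
    (hindep : iIndepFun (m := fun _ : Fin n ⊕ Fin n => (inferInstance : MeasurableSpace ℝ))
      (Sum.elim X (fun j => (A j).indicator (fun _ => (1 : ℝ)))) P) :
    IsSubExponential P
      (fun ω => ∑ i, |X i ω - ∫ x, X i x ∂P| ^ 2 * (A i).indicator (fun _ => (1 : ℝ)) ω)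
      (2 * Real.sqrt (∑ i, (σ i) ^ 4))
      (4 * Finset.univ.sup' ⟨⟨0, hn⟩, Finset.mem_univ _⟩ (fun i => (σ i) ^ 2)) := by
  classical
  set ind : Fin n → Ω → ℝ := fun j => (A j).indicator (fun _ => (1 : ℝ)) with hind_def
  set v : Fin n → NNReal := fun i => Real.toNNReal ((σ i)^2) with hv_def
  have hσ2 : ∀ i, (0:ℝ) < (σ i)^2 := fun i =>
    lt_of_le_of_ne (sq_nonneg _) (Ne.symm (pow_ne_zero 2 (hσ i)))
  have hv0 : ∀ i, v i ≠ 0 := fun i => by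
    simp only [hv_def, ne_eq, Real.toNNReal_eq_zero, not_le]
    exact hσ2 i
  have hvV : ∀ i, ((v i : ℝ)) = (σ i)^2 := fun i => Real.coe_toNNReal _ (sq_nonneg _)
  -- transfer lemmas
  have htrans_eq : ∀ (i : Fin n) (f : ℝ → ℝ), Measurable f →
      ∫ ω, f (X i ω) ∂P = ∫ x, f x ∂(gaussianReal (μ i) (v i)) := by
    intro i f hf
    rw [← hlaw i, integral_map (hXm i).aemeasurable hf.aestronglyMeasurable]
  have htrans_int : ∀ (i : Fin n) (f : ℝ → ℝ), Measurable f →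
      Integrable f (gaussianReal (μ i) (v i)) → Integrable (fun ω => f (X i ω)) P := by
    intro i f hf h
    rw [← hlaw i] at h
    exact (integrable_map_measure hf.aestronglyMeasurable (hXm i).aemeasurable).mp h
  -- means
  have hmean : ∀ i, ∫ x, X i x ∂P = μ i := fun i =>
    (htrans_eq i (fun x => x) measurable_id).trans (aux_gauss_mean (μ i) (v i) (hv0 i))
  set Y : Fin n → Ω → ℝ := fun i ω => (X i ω - μ i)^2 * ind i ω with hY_def
  set p : Fin n → ℝ := fun i => (P (A i)).toReal with hp_def
  have hind_meas : ∀ i, Measurable (ind i) := fun i => measurable_const.indicator (hA i)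
  have hind_int : ∀ i, Integrable (ind i) P := fun i => (integrable_const (1:ℝ)).indicator (hA i)
  have hind_eq : ∀ i, ∫ ω, ind i ω ∂P = p i := by
    intro i
    rw [hind_def, hp_def]
    simp [integral_indicator_const (1:ℝ) (hA i), measureReal_def]
  have hp0 : ∀ i, 0 ≤ p i := fun i => ENNReal.toReal_nonneg
  have hp1 : ∀ i, p i ≤ 1 := by
    intro i
    have h := ENNReal.toReal_mono ENNReal.one_ne_top (prob_le_one (μ := P) (s := A i))
    simpa using h
  have hIndepXind : ∀ i, IndepFun (X i) (ind i) P := fun i =>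
    hindep.indepFun (show (Sum.inl i : Fin n ⊕ Fin n) ≠ Sum.inr i by simp)
  have hq_meas : ∀ i, Measurable (fun x : ℝ => (x - μ i)^2) := fun i =>
    (measurable_id.sub_const _).pow_const 2
  have hq_int : ∀ i, Integrable (fun ω => (X i ω - μ i)^2) P := fun i =>
    htrans_int i _ (hq_meas i) (aux_gauss_sq_integrable (μ i) (v i) (hv0 i))
  have hq_eq : ∀ i, ∫ ω, (X i ω - μ i)^2 ∂P = (σ i)^2 := fun i =>
    ((htrans_eq i (fun x => (x - μ i)^2) (hq_meas i)).trans
      (aux_gauss_sq (μ i) (v i) (hv0 i))).trans (hvV i)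
  have hYindep : ∀ i, IndepFun (fun ω => (X i ω - μ i)^2) (ind i) P := fun i =>
    (hIndepXind i).comp (hq_meas i) measurable_id
  have hY_meas : ∀ i, Measurable (Y i) := fun i =>
    (((hXm i).sub_const _).pow_const 2).mul (hind_meas i)
  have hY_int : ∀ i, Integrable (Y i) P := fun i =>
    (hYindep i).integrable_mul (hq_int i) (hind_int i)
  have hEY : ∀ i, ∫ ω, Y i ω ∂P = (σ i)^2 * p i := by
    intro i
    have h : ∫ ω, (X i ω - μ i)^2 * ind i ω ∂P
        = (∫ ω, (X i ω - μ i)^2 ∂P) * ∫ ω, ind i ω ∂P :=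
      (hYindep i).integral_fun_mul_eq_mul_integral (hq_int i).aestronglyMeasurable (hind_int i).aestronglyMeasurable
    rw [hY_def]
    rw [h, hq_eq i, hind_eq i]
  have hfun_eq : (fun ω => ∑ i, |X i ω - ∫ x, X i x ∂P| ^ 2 * ind i ω)
      = fun ω => ∑ i, Y i ω := by
    funext ω
    refine Finset.sum_congr rfl fun i _ => ?_
    rw [hmean i, sq_abs, hY_def]
  rw [hfun_eq]
  have hsup_mem : ∀ i, (σ i)^2
      ≤ Finset.univ.sup' ⟨⟨0, hn⟩, Finset.mem_univ _⟩ (fun i => (σ i)^2) := fun i =>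
    Finset.le_sup' (fun i => (σ i)^2) (Finset.mem_univ i)
  have hsup_pos : 0 < Finset.univ.sup' ⟨⟨0, hn⟩, Finset.mem_univ _⟩ (fun i => (σ i)^2) :=
    lt_of_lt_of_le (hσ2 ⟨0, hn⟩) (hsup_mem ⟨0, hn⟩)
  have hsum4 : 0 < ∑ i, (σ i)^4 :=
    Finset.sum_pos (fun i _ => by nlinarith [hσ2 i]) ⟨⟨0, hn⟩, Finset.mem_univ _⟩
  refine ⟨mul_pos two_pos (Real.sqrt_pos.mpr hsum4), by positivity,
    Finset.measurable_sum _ (fun i _ => hY_meas i),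
    integrable_finset_sum _ (fun i _ => hY_int i), ?_⟩
  intro l hl
  set bb : ℝ := 4 * Finset.univ.sup' ⟨⟨0, hn⟩, Finset.mem_univ _⟩ (fun i => (σ i)^2) with hbb
  have hbb_pos : 0 < bb := by positivity
  have hlb : |l| < 1 / bb := abs_lt.mpr ⟨by linarith [hl.1], hl.2⟩
  have ht4 : ∀ i, |l * (σ i)^2| < 1/4 := by
    intro i
    rw [abs_mul, abs_of_pos (hσ2 i)]
    calc |l| * (σ i)^2
        ≤ |l| * Finset.univ.sup' ⟨⟨0, hn⟩, Finset.mem_univ _⟩ (fun i => (σ i)^2) :=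
          mul_le_mul_of_nonneg_left (hsup_mem i) (abs_nonneg l)
      _ < (1/bb) * Finset.univ.sup' ⟨⟨0, hn⟩, Finset.mem_univ _⟩ (fun i => (σ i)^2) :=
          mul_lt_mul_of_pos_right hlb hsup_pos
      _ = 1/4 := by
          rw [hbb]; field_simp
  have hl2 : ∀ i, 2*l*((v i : ℝ)) < 1 := by
    intro i
    rw [hvV i]
    have h := (abs_lt.mp (ht4 i)).2
    nlinarith
  have hexpq_meas : ∀ i, Measurable (fun x : ℝ => Real.exp (l * (x - μ i)^2)) := fun i =>
    ((hq_meas i).const_mul l).exp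
  have hexpq_int : ∀ i, Integrable (fun ω => Real.exp (l * (X i ω - μ i)^2)) P := fun i =>
    htrans_int i _ (hexpq_meas i) (aux_gauss_exp_sq_integrable (μ i) (v i) (hv0 i) l (hl2 i))
  have hexpq_eq : ∀ i, ∫ ω, Real.exp (l * (X i ω - μ i)^2) ∂P
      = (Real.sqrt (1 - 2*l*(σ i)^2))⁻¹ := fun i =>
    (htrans_eq i (fun x => Real.exp (l * (x - μ i)^2)) (hexpq_meas i)).trans
      ((aux_gauss_exp_sq (μ i) (v i) (hv0 i) l (hl2 i)).trans (by rw [hvV i]))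
  have hpt : ∀ (i : Fin n) (ω : Ω), Real.exp (l * Y i ω)
      = 1 + (Real.exp (l * (X i ω - μ i)^2) - 1) * ind i ω := by
    intro i ω
    by_cases hω : ω ∈ A i
    · have h1 : ind i ω = 1 := by simp [hind_def, Set.indicator_of_mem hω]
      rw [hY_def]
      simp only [h1, mul_one]
      ring
    · have h1 : ind i ω = 0 := by simp [hind_def, Set.indicator_of_notMem hω]
      rw [hY_def]
      simp [h1]
  have hqind_indep : ∀ i, IndepFun (fun ω => Real.exp (l * (X i ω - μ i)^2) - 1) (ind i) P :=
    fun i => (hIndepXind i).comp ((hexpq_meas i).sub_const 1) measurable_id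
  have hprod_int : ∀ i, Integrable (fun ω => (Real.exp (l * (X i ω - μ i)^2) - 1) * ind i ω) P :=
    fun i => (hqind_indep i).integrable_mul ((hexpq_int i).sub (integrable_const 1)) (hind_int i)
  have h_int_expY : ∀ i, Integrable (fun ω => Real.exp (l * Y i ω)) P := by
    intro i
    have h : (fun ω => Real.exp (l * Y i ω))
        = fun ω => 1 + (Real.exp (l * (X i ω - μ i)^2) - 1) * ind i ω := funext (hpt i)
    rw [h]
    exact (integrable_const 1).add (hprod_int i)
  have h_mgfY : ∀ i, ∫ ω, Real.exp (l * Y i ω) ∂P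
      = 1 + p i * ((Real.sqrt (1 - 2*l*(σ i)^2))⁻¹ - 1) := by
    intro i
    have h0 : ∫ ω, Real.exp (l * Y i ω) ∂P
        = ∫ ω, (1 + (Real.exp (l * (X i ω - μ i)^2) - 1) * ind i ω) ∂P :=
      integral_congr_ae (Filter.Eventually.of_forall fun ω => hpt i ω)
    have hmul : ∫ ω, (Real.exp (l * (X i ω - μ i)^2) - 1) * ind i ω ∂P
        = (∫ ω, (Real.exp (l * (X i ω - μ i)^2) - 1) ∂P) * ∫ ω, ind i ω ∂P :=
      (hqind_indep i).integral_fun_mul_eq_mul_integral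
        ((hexpq_int i).sub (integrable_const 1)).aestronglyMeasurable (hind_int i).aestronglyMeasurable
    rw [h0, integral_add (integrable_const 1) (hprod_int i), integral_const, probReal_univ,
      hmul, integral_sub (hexpq_int i) (integrable_const 1), integral_const, probReal_univ,
      hexpq_eq i, hind_eq i]
    simp
    ring
  have hpair : ∀ (s : Finset (Fin n)) (i : Fin n), i ∉ s →
      IndepFun (Y i) (fun ω => ∑ j ∈ s, Y j ω) P := by
    intro s i hi
    have hmeas : ∀ k : Fin n ⊕ Fin n, Measurable (Sum.elim X ind k) := by
      intro k
      cases k with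
      | inl j => exact hXm j
      | inr j => exact hind_meas j
    exact aux_indepFun_pair (Sum.elim X ind) hmeas hindep μ s i hi
  obtain ⟨hS_int, hS_prod⟩ := aux_sum_exp P Y hpair l h_int_expY Finset.univ
  have hES : ∫ ω, (∑ i, Y i ω) ∂P = ∑ i, (σ i)^2 * p i := by
    rw [integral_finset_sum Finset.univ (fun i _ => hY_int i)]
    exact Finset.sum_congr rfl fun i _ => hEY i
  have key : ∫⁻ ω, ENNReal.ofReal (Real.exp (l * ((∑ i, Y i ω) - ∑ i, (σ i)^2 * p i))) ∂P
      ≤ ENNReal.ofReal (Real.exp (l^2 * (2 * Real.sqrt (∑ i, (σ i)^4))^2 / 2)) := by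
    set c : ℝ := ∑ i, (σ i)^2 * p i with hc
    have hconst : (fun ω => Real.exp (l * ((∑ i, Y i ω) - c)))
        = fun ω => Real.exp (-(l*c)) * Real.exp (l * ∑ i, Y i ω) := by
      funext ω
      rw [← Real.exp_add]
      congr 1
      ring
    have hInt : Integrable (fun ω => Real.exp (l * ((∑ i, Y i ω) - c))) P := by
      rw [hconst]
      exact hS_int.const_mul _
    rw [← MeasureTheory.ofReal_integral_eq_lintegral_ofReal hInt
      (Filter.Eventually.of_forall fun ω => (Real.exp_pos _).le)]
    apply ENNReal.ofReal_le_ofReal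
    have hsum_neg : ∑ i, -(l * ((σ i)^2 * p i)) = -(l * c) := by
      rw [hc, Finset.mul_sum, ← Finset.sum_neg_distrib]
    calc ∫ ω, Real.exp (l * ((∑ i, Y i ω) - c)) ∂P
        = Real.exp (-(l*c)) * ∫ ω, Real.exp (l * ∑ i, Y i ω) ∂P := by
          rw [hconst, integral_const_mul]
      _ = Real.exp (-(l*c)) * ∏ i, ∫ ω, Real.exp (l * Y i ω) ∂P := by rw [hS_prod]
      _ = ∏ i, (Real.exp (-(l * ((σ i)^2 * p i))) * ∫ ω, Real.exp (l * Y i ω) ∂P) := by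
          rw [Finset.prod_mul_distrib, ← Real.exp_sum, hsum_neg]
      _ ≤ ∏ i, Real.exp (2*(l*(σ i)^2)^2) := by
          apply Finset.prod_le_prod
          · intro i _
            exact mul_nonneg (Real.exp_pos _).le
              (integral_nonneg fun ω => (Real.exp_pos _).le)
          · intro i _
            rw [h_mgfY i,
              show -(l * ((σ i)^2 * p i)) = -(p i * (l * (σ i)^2)) by ring,
              show (1:ℝ) - 2*l*(σ i)^2 = 1 - 2*(l*(σ i)^2) by ring]
            exact aux_key (p i) (l * (σ i)^2) (hp0 i) (hp1 i) (ht4 i)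
      _ = Real.exp (∑ i, 2*(l*(σ i)^2)^2) := (Real.exp_sum _ _).symm
      _ ≤ Real.exp (l^2 * (2 * Real.sqrt (∑ i, (σ i)^4))^2 / 2) := by
          apply Real.exp_le_exp.mpr
          have hsqrt : (2 * Real.sqrt (∑ i, (σ i)^4))^2 = 4 * ∑ i, (σ i)^4 := by
            rw [mul_pow, Real.sq_sqrt (Finset.sum_nonneg fun i _ => by positivity)]
            norm_num
          have hsum2 : ∑ i, 2*(l*(σ i)^2)^2 = 2 * l^2 * ∑ i, (σ i)^4 := by
            rw [Finset.mul_sum]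
            exact Finset.sum_congr rfl fun i _ => by ring
          rw [hsqrt, hsum2]
          apply le_of_eq
          ring
  simp only [hES] at key ⊢
  exact key
end
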